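/- Let Γ be a connected cubic graph that admits at least one cyclic edge cut, and let C be a cyclic edge cut of minimum cardinality among all cyclic edge cuts of Γ. Then C is a cracker of Γ; consequently, the cyclic edge connectivity of Γ equals the minimum size of a cracker in Γ. -/

import Mathlib

open SimpleGraph

/-- A graph is cubic if every vertex has exactly three neighbours. -/
def IsCubic {V : Type*} (G : SimpleGraph V) : Prop :=
  ∀ v : V, (G.neighborSet v).ncard = 3

/-- A cracker of `G`: a nonempty set of edges of `G`, no two of which share a
vertex, whose deletion disconnects `G`, while no proper subset disconnects `G`. -/
def IsCracker {V : Type*} (G : SimpleGraph V) (C : Set (Sym2 V)) : Prop :=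
  C.Nonempty ∧ C ⊆ G.edgeSet ∧
    C.Pairwise (fun e f => ∀ v : V, ¬(v ∈ e ∧ v ∈ f)) ∧
    ¬(G.deleteEdges C).Connected ∧
    ∀ C' : Set (Sym2 V), C' ⊂ C → (G.deleteEdges C').Connected

/-- A `k`-cracker is a cracker consisting of `k` edges. -/
def IsKCracker {V : Type*} (G : SimpleGraph V) (C : Set (Sym2 V)) (k : ℕ) : Prop :=
  IsCracker G C ∧ C.ncard = k

/-- A cyclic edge cut: a set of edges whose deletion disconnects the graph in such a
way that at least two of the resulting connected components contain a cycle. -/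
def IsCyclicEdgeCut {V : Type*} (G : SimpleGraph V) (C : Set (Sym2 V)) : Prop :=
  C ⊆ G.edgeSet ∧ ¬(G.deleteEdges C).Connected ∧
    ∃ K₁ K₂ : (G.deleteEdges C).ConnectedComponent, K₁ ≠ K₂ ∧
      (∃ v : V, (G.deleteEdges C).connectedComponentMk v = K₁ ∧
        ∃ c : (G.deleteEdges C).Walk v v, c.IsCycle) ∧
      (∃ v : V, (G.deleteEdges C).connectedComponentMk v = K₂ ∧
        ∃ c : (G.deleteEdges C).Walk v v, c.IsCycle)

private lemma sym2_exists_rep {V : Type*} (e : Sym2 V) : ∃ a b : V, e = s(a, b) :=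
  Sym2.ind (fun a b => ⟨a, b, rfl⟩) e

private lemma walk_end_mem_closed {V : Type*} {H : SimpleGraph V} {S : Set V}
    (hS : ∀ a b, a ∈ S → H.Adj a b → b ∈ S) :
    ∀ {u w : V}, H.Walk u w → u ∈ S → w ∈ S := by
  intro u w p
  induction p with
  | nil => exact id
  | cons h p ih => intro hu; exact ih (hS _ _ hu h)

private lemma reachable_of_mem_support {V : Type*} {H : SimpleGraph V} {u x w : V}
    (p : H.Walk u x) (hw : w ∈ p.support) : H.Reachable u w := by
  classical
  exact ⟨p.takeUntil w hw⟩

private lemma two_le_ncard_neighborSet_of_mem_cycle {V : Type*} [Fintype V] {H : SimpleGraph V}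
    {a v : V} {c : H.Walk a a} (hc : c.IsCycle) (hv : v ∈ c.support) :
    2 ≤ (H.neighborSet v).ncard := by
  classical
  have hcyc : (c.rotate v hv).IsCycle := hc.rotate hv
  obtain ⟨s, hws, q, hq⟩ := (Walk.not_nil_iff).mp hcyc.not_nil
  rw [hq, Walk.cons_isCycle_iff] at hcyc
  obtain ⟨hqpath, hqe⟩ := hcyc
  have hql : 2 ≤ q.length := by
    have h3 := (hc.rotate hv).three_le_length
    rw [hq, Walk.length_cons] at h3
    omega
  have hqrnil : ¬ q.reverse.Nil := by
    rw [Walk.nil_iff_length_eq, Walk.length_reverse]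
    omega
  obtain ⟨t, hwt, q', hq'⟩ := (Walk.not_nil_iff).mp hqrnil
  have hts : t ≠ s := by
    rintro rfl
    apply hqe
    have : s(v, t) ∈ q.reverse.edges := by rw [hq']; simp
    rwa [Walk.edges_reverse, List.mem_reverse] at this
  have hsub : ({s, t} : Set V) ⊆ H.neighborSet v := by
    intro z hz
    rcases hz with rfl | hz
    · exact hws
    · rw [Set.mem_singleton_iff] at hz; subst hz; exact hwt
  calc 2 = ({s, t} : Set V).ncard := (Set.ncard_pair (Ne.symm hts)).symm
    _ ≤ (H.neighborSet v).ncard := Set.ncard_le_ncard hsub (Set.toFinite _)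

private lemma exists_cycle_of_two_le_degree {V : Type*} [Fintype V] (H : SimpleGraph V)
    (hdeg : ∀ v, 2 ≤ (H.neighborSet v).ncard) (u : V) :
    ∃ w, H.Reachable u w ∧ ∃ c : H.Walk w w, c.IsCycle := by
  classical
  set S : Set ℕ := {n | ∃ w, ∃ p : H.Walk u w, p.IsPath ∧ p.length = n} with hS
  have hne : S.Nonempty := ⟨0, u, Walk.nil, Walk.IsPath.nil, rfl⟩
  have hbdd : BddAbove S := ⟨Fintype.card V, fun n hn => by
    obtain ⟨w, p, hp, rfl⟩ := hn; exact hp.length_lt.le⟩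
  obtain ⟨w, p, hp, hlen⟩ := Nat.sSup_mem hne hbdd
  have hnbr : ∀ y, H.Adj w y → y ∈ p.support := by
    intro y hy
    by_contra hys
    have hpath : (p.concat hy).IsPath := by
      rw [← Walk.isPath_reverse_iff, Walk.reverse_concat, Walk.cons_isPath_iff]
      refine ⟨(Walk.isPath_reverse_iff p).mpr hp, ?_⟩
      rw [Walk.support_reverse, List.mem_reverse]
      exact hys
    have hmem : p.length + 1 ∈ S := ⟨y, p.concat hy, hpath, Walk.length_concat _ _⟩
    have := le_csSup hbdd hmem
    omega
  have hpnil : ¬ p.Nil := by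
    intro hnil
    have hwu : u = w := hnil.eq
    obtain ⟨y, hy⟩ := Set.nonempty_of_ncard_ne_zero (by have := hdeg w; omega :
      (H.neighborSet w).ncard ≠ 0)
    have hmem := hnbr y hy
    rw [Walk.nil_iff_support_eq.mp hnil] at hmem
    simp only [List.mem_singleton] at hmem
    subst hmem
    exact H.irrefl (hwu ▸ hy)
  have hrnil : ¬ p.reverse.Nil := by
    rw [Walk.nil_iff_length_eq, Walk.length_reverse, ← Walk.nil_iff_length_eq]
    exact hpnil
  obtain ⟨z, hwz, r', hr'eq⟩ := (Walk.not_nil_iff).mp hrnil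
  have hrpath : p.reverse.IsPath := (Walk.isPath_reverse_iff p).mpr hp
  rw [hr'eq, Walk.cons_isPath_iff] at hrpath
  obtain ⟨hr'path, hwr'⟩ := hrpath
  obtain ⟨x, hx, hxz⟩ := Set.exists_ne_of_one_lt_ncard (s := H.neighborSet w)
    (by have := hdeg w; omega) z
  have hadjwx : H.Adj w x := hx
  have hxw : x ≠ w := fun h => H.irrefl (h ▸ hadjwx)
  have hxp : x ∈ p.support := hnbr x hadjwx
  have hxr : x ∈ p.reverse.support := by
    rw [Walk.support_reverse, List.mem_reverse]; exact hxp
  have hxr' : x ∈ r'.support := by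
    rw [hr'eq, Walk.support_cons, List.mem_cons] at hxr
    rcases hxr with h | h
    · exact absurd h hxw
    · exact h
  set t := r'.takeUntil x hxr' with ht
  have htpath : t.IsPath := hr'path.takeUntil hxr'
  have hwt : w ∉ t.support := fun h => hwr' (Walk.support_takeUntil_subset _ _ h)
  have hcyc : (Walk.cons hwz (t.concat hadjwx.symm)).IsCycle := by
    rw [Walk.cons_isCycle_iff]
    constructor
    · rw [← Walk.isPath_reverse_iff, Walk.reverse_concat, Walk.cons_isPath_iff]
      refine ⟨(Walk.isPath_reverse_iff t).mpr htpath, ?_⟩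
      rw [Walk.support_reverse, List.mem_reverse]
      exact hwt
    · rw [Walk.edges_concat]
      intro hmem
      rw [List.concat_eq_append, List.mem_append] at hmem
      rcases hmem with h | h
      · exact hwt (t.fst_mem_support_of_mem_edges h)
      · rw [List.mem_singleton, Sym2.eq_iff] at h
        rcases h with ⟨h1, h2⟩ | ⟨h1, h2⟩
        · exact hxw h1.symm
        · exact hxz h2.symm
  exact ⟨w, ⟨p⟩, _, hcyc⟩

private lemma isCyclicEdgeCut_of_cycles {V : Type*} {G : SimpleGraph V} {C : Set (Sym2 V)}
    (hsub : C ⊆ G.edgeSet) {a b : V}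
    (hnr : ¬ (G.deleteEdges C).Reachable a b)
    (c₁ : (G.deleteEdges C).Walk a a) (hc₁ : c₁.IsCycle)
    (c₂ : (G.deleteEdges C).Walk b b) (hc₂ : c₂.IsCycle) :
    IsCyclicEdgeCut G C := by
  refine ⟨hsub, fun hcon => hnr (hcon.preconnected a b),
    (G.deleteEdges C).connectedComponentMk a, (G.deleteEdges C).connectedComponentMk b,
    ?_, ⟨a, rfl, c₁, hc₁⟩, ⟨b, rfl, c₂, hc₂⟩⟩
  intro h
  exact hnr (ConnectedComponent.exact h)

private lemma two_le_degree_deleteEdges {V : Type*} [Fintype V] {G : SimpleGraph V}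
    (hcub : IsCubic G) {C : Set (Sym2 V)}
    (hpair : C.Pairwise (fun e f => ∀ v : V, ¬(v ∈ e ∧ v ∈ f))) (v : V) :
    2 ≤ ((G.deleteEdges C).neighborSet v).ncard := by
  classical
  set D : Set V := {y | G.Adj v y ∧ s(v, y) ∈ C} with hD
  have hD1 : D.ncard ≤ 1 := by
    rcases D.eq_empty_or_nonempty with h | ⟨y, hy⟩
    · simp [h]
    · have hsubD : D ⊆ {y} := by
        intro z hz
        rw [Set.mem_singleton_iff]
        by_contra hzy
        have hne : s(v, z) ≠ s(v, y) := by
          intro hh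
          rw [Sym2.eq_iff] at hh
          rcases hh with ⟨-, h⟩ | ⟨h1, h2⟩
          · exact hzy h
          · exact G.irrefl (h2 ▸ hz.1)
        exact hpair hz.2 hy.2 hne v ⟨Sym2.mem_mk_left v z, Sym2.mem_mk_left v y⟩
      calc D.ncard ≤ ({y} : Set V).ncard := Set.ncard_le_ncard hsubD (Set.toFinite _)
        _ = 1 := Set.ncard_singleton y
  have hsub2 : G.neighborSet v \ D ⊆ (G.deleteEdges C).neighborSet v := by
    intro y hy
    rw [mem_neighborSet, deleteEdges_adj]
    exact ⟨hy.1, fun hc => hy.2 ⟨hy.1, hc⟩⟩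
  have h1 := Set.ncard_le_ncard hsub2 (Set.toFinite _)
  have h2 := Set.le_ncard_diff D (G.neighborSet v) (Set.toFinite _)
  rw [hcub v] at h2
  omega

private lemma cracker_isCyclicEdgeCut {V : Type*} [Fintype V] {G : SimpleGraph V}
    (hG : G.Connected) (hcub : IsCubic G) {C : Set (Sym2 V)} (hcr : IsCracker G C) :
    IsCyclicEdgeCut G C := by
  obtain ⟨hne, hsub, hpair, hdisc, -⟩ := hcr
  haveI : Nonempty V := hG.nonempty
  have hdeg := fun v => two_le_degree_deleteEdges hcub hpair v
  obtain ⟨x, y, hxy⟩ : ∃ x y, ¬ (G.deleteEdges C).Reachable x y := by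
    by_contra h
    push_neg at h
    exact hdisc ⟨fun u v => h u v⟩
  obtain ⟨w₁, hr₁, c₁, hc₁⟩ := exists_cycle_of_two_le_degree _ hdeg x
  obtain ⟨w₂, hr₂, c₂, hc₂⟩ := exists_cycle_of_two_le_degree _ hdeg y
  refine isCyclicEdgeCut_of_cycles hsub (a := w₁) (b := w₂) ?_ c₁ hc₁ c₂ hc₂
  intro h
  exact hxy (hr₁.trans (h.trans hr₂.symm))

/-- in a connected cubic graph, a minimum-cardinality cyclic edge cut is a
cracker; consequently the cyclic edge connectivity equals the minimum size of a cracker. -/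
theorem min_cyclicEdgeCut_isCracker {V : Type*} [Fintype V] (G : SimpleGraph V)
    (hG : G.Connected) (hcub : IsCubic G)
    (C : Set (Sym2 V)) (hC : IsCyclicEdgeCut G C)
    (hmin : ∀ C' : Set (Sym2 V), IsCyclicEdgeCut G C' → C.ncard ≤ C'.ncard) :
    IsCracker G C ∧
      sInf {n : ℕ | ∃ C' : Set (Sym2 V), IsCyclicEdgeCut G C' ∧ C'.ncard = n} =
        sInf {n : ℕ | ∃ C' : Set (Sym2 V), IsCracker G C' ∧ C'.ncard = n} := by
  classical
  obtain ⟨hsub, hdisc, K₁, K₂, hK12, ⟨v₁, hv₁, c₁, hc₁⟩, ⟨v₂, hv₂, c₂, hc₂⟩⟩ := hC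
  haveI : Nonempty V := hG.nonempty
  have Cfin : C.Finite := Set.toFinite C
  -- every edge of `C` touches each of the two cycle components
  have touch : ∀ (K K' : (G.deleteEdges C).ConnectedComponent) (w w' : V)
      (cW : (G.deleteEdges C).Walk w w) (cW' : (G.deleteEdges C).Walk w' w'),
      cW.IsCycle → cW'.IsCycle → (G.deleteEdges C).connectedComponentMk w = K →
      (G.deleteEdges C).connectedComponentMk w' = K' → K ≠ K' →
      ∀ e ∈ C, ∃ z, z ∈ e ∧ (G.deleteEdges C).connectedComponentMk z = K := by
    intro K K' w w' cW cW' hcW hcW' hw hw' hKK'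
    set CK : Set (Sym2 V) := {e | e ∈ C ∧ ∃ z, z ∈ e ∧ (G.deleteEdges C).connectedComponentMk z = K}
      with hCK
    have hCKsub : CK ⊆ C := fun e he => he.1
    have hle : G.deleteEdges C ≤ G.deleteEdges CK := by
      intro a b hab
      rw [deleteEdges_adj] at hab
      rw [deleteEdges_adj]
      exact ⟨hab.1, fun h => hab.2 (hCKsub h)⟩
    have hclosed : ∀ a b, a ∈ {z | (G.deleteEdges C).connectedComponentMk z = K} →
        (G.deleteEdges CK).Adj a b → b ∈ {z | (G.deleteEdges C).connectedComponentMk z = K} := by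
      intro a b ha hab
      rw [deleteEdges_adj] at hab
      by_cases hc : s(a, b) ∈ C
      · exact absurd (show s(a, b) ∈ CK from ⟨hc, a, Sym2.mem_mk_left a b, ha⟩) hab.2
      · have hadj : (G.deleteEdges C).Adj a b := by
          rw [deleteEdges_adj]; exact ⟨hab.1, hc⟩
        show (G.deleteEdges C).connectedComponentMk b = K
        rw [← ha]
        exact (ConnectedComponent.connectedComponentMk_eq_of_adj hadj).symm
    have hnr : ¬ (G.deleteEdges CK).Reachable w w' := by
      intro h
      obtain ⟨q⟩ := h
      have hmem := walk_end_mem_closed hclosed q hw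
      exact hKK' (hw'.symm.trans hmem).symm
    have hedges : ∀ {x : V} (p : (G.deleteEdges C).Walk x x),
        ∀ e ∈ p.edges, e ∈ (G.deleteEdges CK).edgeSet :=
      fun p e he => edgeSet_mono hle (p.edges_subset_edgeSet he)
    have hcyc : IsCyclicEdgeCut G CK :=
      isCyclicEdgeCut_of_cycles (fun e he => hsub (hCKsub he)) hnr
        (cW.transfer _ (hedges cW)) (hcW.transfer _)
        (cW'.transfer _ (hedges cW')) (hcW'.transfer _)
    have hEq : CK = C := Set.eq_of_subset_of_ncard_le hCKsub (hmin CK hcyc) Cfin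
    intro e he
    have : e ∈ CK := hEq.symm ▸ he
    exact this.2
  -- every edge of `C` goes from `K₁` to `K₂`
  have endpoints : ∀ e ∈ C, ∃ x y, e = s(x, y) ∧
      (G.deleteEdges C).connectedComponentMk x = K₁ ∧
      (G.deleteEdges C).connectedComponentMk y = K₂ := by
    intro e he
    obtain ⟨z₁, hz₁e, hz₁⟩ := touch K₁ K₂ v₁ v₂ c₁ c₂ hc₁ hc₂ hv₁ hv₂ hK12 e he
    obtain ⟨z₂, hz₂e, hz₂⟩ := touch K₂ K₁ v₂ v₁ c₂ c₁ hc₂ hc₁ hv₂ hv₁ hK12.symm e he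
    obtain ⟨a, b, rfl⟩ := sym2_exists_rep e
    rw [Sym2.mem_iff] at hz₁e hz₂e
    rcases hz₁e with rfl | rfl <;> rcases hz₂e with rfl | rfl
    · exact absurd (hz₁.symm.trans hz₂) hK12
    · exact ⟨z₁, z₂, rfl, hz₁, hz₂⟩
    · exact ⟨z₁, z₂, Sym2.eq_swap, hz₁, hz₂⟩
    · exact absurd (hz₁.symm.trans hz₂) hK12
  -- every vertex lies in `K₁` or `K₂`
  have hcover : ∀ z, (G.deleteEdges C).connectedComponentMk z = K₁ ∨
      (G.deleteEdges C).connectedComponentMk z = K₂ := by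
    intro z
    have hstep : ∀ a b, a ∈ {y | (G.deleteEdges C).connectedComponentMk y = K₁ ∨
        (G.deleteEdges C).connectedComponentMk y = K₂} → G.Adj a b →
        b ∈ {y | (G.deleteEdges C).connectedComponentMk y = K₁ ∨
        (G.deleteEdges C).connectedComponentMk y = K₂} := by
      intro a b ha hab
      by_cases hc : s(a, b) ∈ C
      · obtain ⟨x, y, hexy, hx, hy⟩ := endpoints _ hc
        have hb : b = x ∨ b = y := by
          have : b ∈ s(x, y) := hexy ▸ Sym2.mem_mk_right a b
          rwa [Sym2.mem_iff] at this
        rcases hb with rfl | rfl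
        · exact Or.inl hx
        · exact Or.inr hy
      · have hadj : (G.deleteEdges C).Adj a b := by
          rw [deleteEdges_adj]; exact ⟨hab, hc⟩
        have hba : (G.deleteEdges C).connectedComponentMk b =
            (G.deleteEdges C).connectedComponentMk a :=
          (ConnectedComponent.connectedComponentMk_eq_of_adj hadj).symm
        rcases ha with h | h
        · exact Or.inl (hba.trans h)
        · exact Or.inr (hba.trans h)
    obtain ⟨p⟩ := hG.preconnected v₁ z
    exact walk_end_mem_closed hstep p (Or.inl hv₁)
  -- C is nonempty
  have hCne : C.Nonempty := by
    rcases C.eq_empty_or_nonempty with rfl | h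
    · rw [deleteEdges_empty] at hdisc
      exact absurd hG hdisc
    · exact h
  -- minimality: deleting a proper subset keeps the graph connected
  have hminimal : ∀ C'' : Set (Sym2 V), C'' ⊂ C → (G.deleteEdges C'').Connected := by
    intro C'' hss
    obtain ⟨e, heC, heC''⟩ := Set.exists_of_ssubset hss
    obtain ⟨x, y, rfl, hx, hy⟩ := endpoints e heC
    have hle : G.deleteEdges C ≤ G.deleteEdges C'' := by
      intro a b hab
      rw [deleteEdges_adj] at hab
      rw [deleteEdges_adj]
      exact ⟨hab.1, fun h => hab.2 (hss.subset h)⟩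
    have hadjxy : (G.deleteEdges C'').Adj x y := by
      rw [deleteEdges_adj]
      exact ⟨(G.mem_edgeSet).mp (hsub heC), heC''⟩
    have hreach : ∀ z, (G.deleteEdges C'').Reachable z x ∨ (G.deleteEdges C'').Reachable z y := by
      intro z
      rcases hcover z with h | h
      · exact Or.inl (Reachable.mono hle (ConnectedComponent.exact (h.trans hx.symm)))
      · exact Or.inr (Reachable.mono hle (ConnectedComponent.exact (h.trans hy.symm)))
    refine ⟨fun a b => ?_⟩
    have hxy := hadjxy.reachable
    rcases hreach a with ha | ha <;> rcases hreach b with hb | hb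
    · exact ha.trans hb.symm
    · exact ha.trans (hxy.trans hb.symm)
    · exact ha.trans (hxy.symm.trans hb.symm)
    · exact ha.trans hb.symm
  -- C is a matching
  have hpairC : C.Pairwise (fun e f => ∀ v : V, ¬(v ∈ e ∧ v ∈ f)) := by
    intro e he f hf hef
    by_contra hvex
    push_neg at hvex
    obtain ⟨v, hve, hvf⟩ := hvex
    have main : ∀ (K K' : (G.deleteEdges C).ConnectedComponent) (w w' : V)
        (cW : (G.deleteEdges C).Walk w w) (cW' : (G.deleteEdges C).Walk w' w'),
        cW.IsCycle → cW'.IsCycle → (G.deleteEdges C).connectedComponentMk w = K →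
        (G.deleteEdges C).connectedComponentMk w' = K' → K ≠ K' →
        (G.deleteEdges C).connectedComponentMk v = K →
        (∀ g ∈ C, ∃ x y, g = s(x, y) ∧ (G.deleteEdges C).connectedComponentMk x = K ∧
          (G.deleteEdges C).connectedComponentMk y = K') →
        False := by
      intro K K' w w' cW cW' hcW hcW' hw hw' hKK' hvK hB
      -- the other endpoints of e and f
      have hother : ∀ g ∈ C, v ∈ g → ∃ p, g = s(v, p) ∧
          (G.deleteEdges C).connectedComponentMk p = K' := by
        intro g hg hvg
        obtain ⟨x, y, rfl, hx, hy⟩ := hB g hg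
        rcases Sym2.mem_iff.mp hvg with rfl | rfl
        · exact ⟨y, rfl, hy⟩
        · exact absurd (hvK.symm.trans hy) hKK'
      obtain ⟨pe, hee, hpe⟩ := hother e he hve
      obtain ⟨pf, hfe, hpf⟩ := hother f hf hvf
      have hpepf : pe ≠ pf := fun h => hef (by rw [hee, hfe, h])
      -- v has at most one neighbour after deleting C
      have hnbrH : ((G.deleteEdges C).neighborSet v).ncard ≤ 1 := by
        have hsubn : (G.deleteEdges C).neighborSet v ⊆ G.neighborSet v \ {pe, pf} := by
          intro y hy
          rw [mem_neighborSet, deleteEdges_adj] at hy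
          refine ⟨hy.1, ?_⟩
          intro hmem
          rcases hmem with rfl | hmem
          · exact hy.2 (hee ▸ he)
          · rw [Set.mem_singleton_iff] at hmem
            subst hmem
            exact hy.2 (hfe ▸ hf)
        have hsub2 : ({pe, pf} : Set V) ⊆ G.neighborSet v := by
          intro z hz
          rcases hz with rfl | hz
          · exact (G.mem_edgeSet).mp (hsub (hee ▸ he))
          · rw [Set.mem_singleton_iff] at hz
            subst hz
            exact (G.mem_edgeSet).mp (hsub (hfe ▸ hf))
        have h1 := Set.ncard_le_ncard hsubn (Set.toFinite _)
        rw [Set.ncard_diff hsub2, Set.ncard_pair hpepf, hcub v] at h1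
        omega
      have hnotin : ∀ {x : V} (d : (G.deleteEdges C).Walk x x), d.IsCycle → v ∉ d.support := by
        intro x d hd hvd
        have := two_le_ncard_neighborSet_of_mem_cycle hd hvd
        omega
      -- the smaller cut
      set A : Set V := {a | (G.deleteEdges C).connectedComponentMk a = K ∧ a ≠ v} with hA
      set C' : Set (Sym2 V) :=
        {g | g ∈ G.edgeSet ∧ (∃ a, a ∈ g ∧ a ∈ A) ∧ (∃ b, b ∈ g ∧ b ∉ A)} with hC'
      have hC'sub : C' ⊆ G.edgeSet := fun g hg => hg.1
      have hsuppW : ∀ z ∈ cW.support, z ∈ A := by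
        intro z hz
        constructor
        · rw [← hw]
          exact (ConnectedComponent.eq.mpr (reachable_of_mem_support cW hz)).symm
        · rintro rfl
          exact hnotin cW hcW hz
      have hsuppW' : ∀ z ∈ cW'.support, z ∉ A := by
        intro z hz hzA
        have h1 : (G.deleteEdges C).connectedComponentMk z = K' := by
          rw [← hw']
          exact (ConnectedComponent.eq.mpr (reachable_of_mem_support cW' hz)).symm
        exact hKK' (hzA.1.symm.trans h1)
      have hedgeW : ∀ g ∈ cW.edges, g ∈ (G.deleteEdges C').edgeSet := by
        intro g hg
        obtain ⟨a, b, rfl⟩ := sym2_exists_rep g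
        have ha : a ∈ cW.support := cW.fst_mem_support_of_mem_edges hg
        have hb : b ∈ cW.support := cW.snd_mem_support_of_mem_edges hg
        have hadj : (G.deleteEdges C).Adj a b := cW.adj_of_mem_edges hg
        have hGadj : G.Adj a b := by
          rw [deleteEdges_adj] at hadj
          exact hadj.1
        rw [mem_edgeSet, deleteEdges_adj]
        refine ⟨hGadj, ?_⟩
        intro hgC'
        obtain ⟨-, -, b', hb'g, hb'A⟩ := hgC'
        rcases Sym2.mem_iff.mp hb'g with rfl | rfl
        · exact hb'A (hsuppW _ ha)
        · exact hb'A (hsuppW _ hb)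
      have hedgeW' : ∀ g ∈ cW'.edges, g ∈ (G.deleteEdges C').edgeSet := by
        intro g hg
        obtain ⟨a, b, rfl⟩ := sym2_exists_rep g
        have ha : a ∈ cW'.support := cW'.fst_mem_support_of_mem_edges hg
        have hb : b ∈ cW'.support := cW'.snd_mem_support_of_mem_edges hg
        have hadj : (G.deleteEdges C).Adj a b := cW'.adj_of_mem_edges hg
        have hGadj : G.Adj a b := by
          rw [deleteEdges_adj] at hadj
          exact hadj.1
        rw [mem_edgeSet, deleteEdges_adj]
        refine ⟨hGadj, ?_⟩
        intro hgC'
        obtain ⟨-, ⟨a', ha'g, ha'A⟩, -⟩ := hgC'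
        rcases Sym2.mem_iff.mp ha'g with rfl | rfl
        · exact hsuppW' _ ha ha'A
        · exact hsuppW' _ hb ha'A
      have hAclosed : ∀ a b, a ∈ A → (G.deleteEdges C').Adj a b → b ∈ A := by
        intro a b haA hab
        rw [deleteEdges_adj] at hab
        by_contra hbA
        exact hab.2 ⟨(G.mem_edgeSet).mpr hab.1,
          ⟨a, Sym2.mem_mk_left a b, haA⟩, ⟨b, Sym2.mem_mk_right a b, hbA⟩⟩
      have hnr : ¬ (G.deleteEdges C').Reachable w w' := by
        intro h
        obtain ⟨q⟩ := h
        have hwA : w ∈ A := hsuppW w cW.start_mem_support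
        have hmem := walk_end_mem_closed hAclosed q hwA
        exact hsuppW' w' cW'.start_mem_support hmem
      have hcyc' : IsCyclicEdgeCut G C' :=
        isCyclicEdgeCut_of_cycles hC'sub hnr
          (cW.transfer _ hedgeW) (hcW.transfer _)
          (cW'.transfer _ hedgeW') (hcW'.transfer _)
      have hminC' := hmin C' hcyc'
      -- counting: C' is strictly smaller than C
      have hnotA_e : ∀ z, z ∈ (s(v, pe) : Sym2 V) → z ∉ A := by
        intro z hz
        rcases Sym2.mem_iff.mp hz with rfl | rfl
        · exact fun hzA => hzA.2 rfl
        · exact fun hzA => hKK' (hzA.1.symm.trans hpe)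
      have hnotA_f : ∀ z, z ∈ (s(v, pf) : Sym2 V) → z ∉ A := by
        intro z hz
        rcases Sym2.mem_iff.mp hz with rfl | rfl
        · exact fun hzA => hzA.2 rfl
        · exact fun hzA => hKK' (hzA.1.symm.trans hpf)
      have hsubC' : C' ⊆ (C \ {e, f}) ∪ ((fun b => s(v, b)) '' ((G.deleteEdges C).neighborSet v)) := by
        intro g hg
        obtain ⟨hgE, ⟨a0, ha0g, ha0A⟩, ⟨b0, hb0g, hb0A⟩⟩ := hg
        obtain ⟨a1, b1, rfl⟩ := sym2_exists_rep g
        have hcross : ∃ a b, s(a1, b1) = s(a, b) ∧ a ∈ A ∧ b ∉ A := by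
          rcases Sym2.mem_iff.mp ha0g with rfl | rfl <;> rcases Sym2.mem_iff.mp hb0g with rfl | rfl
          · exact absurd ha0A hb0A
          · exact ⟨a0, b0, rfl, ha0A, hb0A⟩
          · exact ⟨a0, b0, Sym2.eq_swap, ha0A, hb0A⟩
          · exact absurd ha0A hb0A
        obtain ⟨a, b, hgeq, haA, hbA⟩ := hcross
        by_cases hgC : s(a1, b1) ∈ C
        · left
          refine ⟨hgC, ?_⟩
          intro hmem
          have hag : a ∈ (s(a1, b1) : Sym2 V) := hgeq ▸ Sym2.mem_mk_left a b
          rcases hmem with rfl | hmem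
          · exact hnotA_e a (hee ▸ hag) haA
          · rw [Set.mem_singleton_iff] at hmem
            exact hnotA_f a (hfe ▸ hmem ▸ hag) haA
        · right
          have hGadj : G.Adj a b := by
            rw [hgeq] at hgE
            exact (G.mem_edgeSet).mp hgE
          have hHadj : (G.deleteEdges C).Adj a b := by
            rw [deleteEdges_adj]
            exact ⟨hGadj, fun h => hgC (by rw [hgeq]; exact h)⟩
          have hmkb : (G.deleteEdges C).connectedComponentMk b = K := by
            rw [← haA.1]
            exact (ConnectedComponent.connectedComponentMk_eq_of_adj hHadj).symm
          have hbv : b = v := by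
            by_contra hbv
            exact hbA ⟨hmkb, hbv⟩
          subst hbv
          exact ⟨a, hHadj.symm, by rw [hgeq, Sym2.eq_swap]⟩
      have hefC : ({e, f} : Set (Sym2 V)) ⊆ C := by
        intro z hz
        rcases hz with rfl | hz
        · exact he
        · rw [Set.mem_singleton_iff] at hz
          subst hz
          exact hf
      have h1 : C'.ncard ≤ (C \ {e, f}).ncard +
          ((fun b => s(v, b)) '' ((G.deleteEdges C).neighborSet v)).ncard :=
        le_trans (Set.ncard_le_ncard hsubC' (Set.toFinite _)) (Set.ncard_union_le _ _)
      have h2 : ((fun b => s(v, b)) '' ((G.deleteEdges C).neighborSet v)).ncard ≤ 1 :=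
        le_trans (Set.ncard_image_le (Set.toFinite _)) hnbrH
      have h3 : (C \ ({e, f} : Set (Sym2 V))).ncard = C.ncard - 2 := by
        rw [Set.ncard_diff hefC, Set.ncard_pair hef]
      have h4 : 2 ≤ C.ncard := by
        calc 2 = ({e, f} : Set (Sym2 V)).ncard := (Set.ncard_pair hef).symm
          _ ≤ C.ncard := Set.ncard_le_ncard hefC Cfin
      omega
    rcases hcover v with hvK | hvK
    · exact main K₁ K₂ v₁ v₂ c₁ c₂ hc₁ hc₂ hv₁ hv₂ hK12 hvK endpoints
    · refine main K₂ K₁ v₂ v₁ c₂ c₁ hc₂ hc₁ hv₂ hv₁ hK12.symm hvK ?_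
      intro g hg
      obtain ⟨x, y, rfl, hx, hy⟩ := endpoints g hg
      exact ⟨y, x, Sym2.eq_swap, hy, hx⟩
  have hcr : IsCracker G C := ⟨hCne, hsub, hpairC, hdisc, hminimal⟩
  refine ⟨hcr, ?_⟩
  have hCcyc : IsCyclicEdgeCut G C := ⟨hsub, hdisc, K₁, K₂, hK12,
    ⟨v₁, hv₁, c₁, hc₁⟩, ⟨v₂, hv₂, c₂, hc₂⟩⟩
  set Scyc : Set ℕ := {n | ∃ C' : Set (Sym2 V), IsCyclicEdgeCut G C' ∧ C'.ncard = n} with hScyc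
  set Scr : Set ℕ := {n | ∃ C' : Set (Sym2 V), IsCracker G C' ∧ C'.ncard = n} with hScr
  have h1 : C.ncard ∈ Scyc := ⟨C, hCcyc, rfl⟩
  have h2 : C.ncard ∈ Scr := ⟨C, hcr, rfl⟩
  have lbcyc : ∀ n ∈ Scyc, C.ncard ≤ n := by
    rintro n ⟨C', hC', rfl⟩
    exact hmin C' hC'
  have lbcr : ∀ n ∈ Scr, C.ncard ≤ n := by
    rintro n ⟨C', hC', rfl⟩
    exact hmin C' (cracker_isCyclicEdgeCut hG hcub hC')
  have e1 : sInf Scyc = C.ncard :=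
    le_antisymm (Nat.sInf_le h1) (lbcyc _ (Nat.sInf_mem ⟨_, h1⟩))
  have e2 : sInf Scr = C.ncard :=
    le_antisymm (Nat.sInf_le h2) (lbcr _ (Nat.sInf_mem ⟨_, h2⟩))
  rw [e1, e2]
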